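/- arXiv:2207.06648 — 2 statements merged into one kernel-verified Lean document; each statement's English description precedes it below -/
import Mathlib

section
/- (Adjoint duality for flows.) Assume P^s, P^u, P^c are continuous on K and let ρ be a φ-invariant Borel probability measure on K. Let ω be a continuous covector field on K, ψ : K → ℝ continuous with d/dt ψ(φ^t x) = ω(φ^t x)(F(φ^t x)) along every orbit in K, and X a continuous vector field on K. Let (v, η) be the specific shadowing pair given by P^c(x)X(x) = η(x)F(x) and v(x) := ∫₀^∞ Dφ^t(φ^{-t}x) P^s(φ^{-t}x) X(φ^{-t}x) dt − ∫₀^∞ Dφ^{-t}(φ^{t}x) P^u(φ^{t}x) X(φ^{t}x) dt, and let ν := 𝒮(ω,ψ) where 𝒮(ω,ψ)(x) := ∫₀^∞ ω(φ^t x) ∘ P^s(φ^t x) ∘ Dφ^t(x) dt − ∫₀^∞ ω(φ^{-t} x) ∘ P^u(φ^{-t} x) ∘ Dφ^{-t}(x) dt − ψ(x) ε^c(x). Then ∫_K ω(x)(v(x)) dρ − ∫_K η(x) ψ(x) dρ = ∫_K ν(x)(X(x)) dρ. -/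
open Function Set Filter MeasureTheory Topology

theorem adjoint_duality_flow
    {E : Type*} [NormedAddCommGroup E] [NormedSpace ℝ E] [FiniteDimensional ℝ E]
    (F : E → E) (hF : ContDiff ℝ 2 F)
    (φ : ℝ → E → E)
    (hφ0 : ∀ x : E, φ 0 x = x)
    (hφadd : ∀ (s t : ℝ) (x : E), φ (s + t) x = φ s (φ t x))
    (hφode : ∀ (x : E) (t : ℝ), HasDerivAt (fun s => φ s x) (F (φ t x)) t)
    (hφC1 : ∀ t : ℝ, ContDiff ℝ 1 (φ t))
    (hφD : Continuous fun p : ℝ × E => fderiv ℝ (φ p.1) p.2)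
    (K : Set E) (hKc : IsCompact K) (hφK : ∀ t : ℝ, φ t '' K = K)
    (hFne : ∀ x ∈ K, F x ≠ 0)
    (Vs Vu Vc : E → Submodule ℝ E)
    (hVc : ∀ x ∈ K, Vc x = Submodule.span ℝ {F x})
    (hequivs : ∀ (t : ℝ), ∀ x ∈ K, (Vs x).map (fderiv ℝ (φ t) x : E →ₗ[ℝ] E) = Vs (φ t x))
    (hequivu : ∀ (t : ℝ), ∀ x ∈ K, (Vu x).map (fderiv ℝ (φ t) x : E →ₗ[ℝ] E) = Vu (φ t x))
    (hequivc : ∀ (t : ℝ), ∀ x ∈ K, (Vc x).map (fderiv ℝ (φ t) x : E →ₗ[ℝ] E) = Vc (φ t x))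
    (C lam : ℝ) (hC : 0 < C) (hlam0 : 0 < lam) (hlam1 : lam < 1)
    (hyps : ∀ t : ℝ, 0 ≤ t → ∀ x ∈ K, ∀ v ∈ Vs x, ‖fderiv ℝ (φ t) x v‖ ≤ C * lam ^ t * ‖v‖)
    (hypu : ∀ t : ℝ, 0 ≤ t → ∀ x ∈ K, ∀ v ∈ Vu x, ‖fderiv ℝ (φ (-t)) x v‖ ≤ C * lam ^ t * ‖v‖)
    (Ps Pu Pc : E → E →L[ℝ] E)
    (hproj : ∀ x ∈ K, ∀ v : E, Ps x v ∈ Vs x ∧ Pu x v ∈ Vu x ∧ Pc x v ∈ Vc x ∧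
      Ps x v + Pu x v + Pc x v = v)
    (hdirect : ∀ x ∈ K, ∀ vs ∈ Vs x, ∀ vu ∈ Vu x, ∀ vc ∈ Vc x,
      vs + vu + vc = 0 → vs = 0 ∧ vu = 0 ∧ vc = 0)
    (hPbdd : ∃ M : ℝ, ∀ x ∈ K, ‖Ps x‖ + ‖Pu x‖ + ‖Pc x‖ ≤ M)
    (εc : E → E →L[ℝ] ℝ)
    (hεc : ∀ x ∈ K, (∀ v ∈ Vs x, εc x v = 0) ∧ (∀ v ∈ Vu x, εc x v = 0) ∧ εc x (F x) = 1)
    [MeasurableSpace E] [BorelSpace E]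
    (ρ : Measure E) [IsProbabilityMeasure ρ] (hρK : ρ K = 1)
    (hρinv : ∀ (t : ℝ) (A : Set E), MeasurableSet A → ρ (φ t ⁻¹' A) = ρ A)
    (hPsc : ContinuousOn Ps K) (hPuc : ContinuousOn Pu K) (hPcc : ContinuousOn Pc K)
    (ω : E → E →L[ℝ] ℝ) (hωc : ContinuousOn ω K)
    (ψ : E → ℝ) (hψc : ContinuousOn ψ K)
    (hψ : ∀ x₀ ∈ K, ∀ t : ℝ,
      HasDerivAt (fun s => ψ (φ s x₀)) (ω (φ t x₀) (F (φ t x₀))) t)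
    (X : E → E) (hXc : ContinuousOn X K)
    (η : E → ℝ) (hη : ∀ x ∈ K, Pc x (X x) = η x • F x)
    (v : E → E)
    (hv : ∀ x ∈ K, v x =
      (∫ t in Ioi (0:ℝ), fderiv ℝ (φ t) (φ (-t) x) (Ps (φ (-t) x) (X (φ (-t) x)))) -
      ∫ t in Ioi (0:ℝ), fderiv ℝ (φ (-t)) (φ t x) (Pu (φ t x) (X (φ t x))))
    (ν : E → E →L[ℝ] ℝ)
    (hν : ∀ x ∈ K, ν x =
      (∫ t in Ioi (0:ℝ), ((ω (φ t x)).comp (Ps (φ t x))).comp (fderiv ℝ (φ t) x)) -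
      (∫ t in Ioi (0:ℝ), ((ω (φ (-t) x)).comp (Pu (φ (-t) x))).comp (fderiv ℝ (φ (-t)) x)) -
      ψ x • εc x) :
    (∫ x in K, ω x (v x) ∂ρ) - (∫ x in K, η x * ψ x ∂ρ) = ∫ x in K, ν x (X x) ∂ρ := by
  classical
  -- Basic facts about the flow and the compact set
  have hKm : MeasurableSet K := hKc.measurableSet
  have hmem : ∀ (t : ℝ), ∀ x ∈ K, φ t x ∈ K := by
    intro t x hx
    have : φ t x ∈ φ t '' K := Set.mem_image_of_mem _ hx
    rwa [hφK t] at this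
  have hinv : ∀ (t : ℝ) (x : E), φ (-t) (φ t x) = x := by
    intro t x; rw [← hφadd, neg_add_cancel, hφ0]
  have hinv' : ∀ (t : ℝ) (x : E), φ t (φ (-t) x) = x := by
    intro t x; rw [← hφadd, add_neg_cancel, hφ0]
  have hpre : ∀ t : ℝ, φ t ⁻¹' K = K := by
    intro t; ext x
    constructor
    · intro hx
      have := hmem (-t) _ hx
      rwa [hinv] at this
    · exact fun hx => hmem t x hx
  have hcx : ∀ x : E, Continuous fun t : ℝ => φ t x := by
    intro x
    exact continuous_iff_continuousAt.2 fun t => (hφode x t).continuousAt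
  -- Measure preservation on K
  have hmeasφ : ∀ t : ℝ, Measurable (φ t) := fun t => (hφC1 t).continuous.measurable
  have hmp : ∀ t : ℝ, MeasurePreserving (φ t) (ρ.restrict K) (ρ.restrict K) := by
    intro t
    refine ⟨hmeasφ t, ?_⟩
    refine Measure.ext fun A hA => ?_
    rw [Measure.map_apply (hmeasφ t) hA, Measure.restrict_apply ((hmeasφ t) hA),
      Measure.restrict_apply hA]
    have hKA : φ t ⁻¹' A ∩ K = φ t ⁻¹' (A ∩ K) := by rw [Set.preimage_inter, hpre t]
    rw [hKA, hρinv t _ (hA.inter hKm)]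
  have hsubst : ∀ (t : ℝ) (g : E → ℝ), ∫ x in K, g (φ t x) ∂ρ = ∫ x in K, g x ∂ρ := by
    intro t g
    have hemb : MeasurableEmbedding (φ t) :=
      Homeomorph.measurableEmbedding
        { toFun := φ t, invFun := φ (-t), left_inv := hinv t, right_inv := hinv' t,
          continuous_toFun := (hφC1 t).continuous, continuous_invFun := (hφC1 (-t)).continuous }
    exact (hmp t).integral_comp hemb g
  -- Uniqueness of the splitting and the commutation relations
  have huniq : ∀ y ∈ K, ∀ w ws wu wc : E, ws ∈ Vs y → wu ∈ Vu y → wc ∈ Vc y →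
      ws + wu + wc = w → Ps y w = ws ∧ Pu y w = wu ∧ Pc y w = wc := by
    intro y hy w ws wu wc hs hu hc hsum
    obtain ⟨h1, h2, h3, h4⟩ := hproj y hy w
    have h0 : (Ps y w - ws) + (Pu y w - wu) + (Pc y w - wc) = 0 := by
      rw [show (Ps y w - ws) + (Pu y w - wu) + (Pc y w - wc)
          = (Ps y w + Pu y w + Pc y w) - (ws + wu + wc) by abel, h4, hsum, sub_self]
    obtain ⟨e1, e2, e3⟩ := hdirect y hy _ (Submodule.sub_mem _ h1 hs) _
      (Submodule.sub_mem _ h2 hu) _ (Submodule.sub_mem _ h3 hc) h0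
    exact ⟨sub_eq_zero.1 e1, sub_eq_zero.1 e2, sub_eq_zero.1 e3⟩
  have hcomm : ∀ (t : ℝ), ∀ x ∈ K, ∀ w : E,
      Ps (φ t x) (fderiv ℝ (φ t) x w) = fderiv ℝ (φ t) x (Ps x w) ∧
      Pu (φ t x) (fderiv ℝ (φ t) x w) = fderiv ℝ (φ t) x (Pu x w) := by
    intro t x hx w
    obtain ⟨h1, h2, h3, h4⟩ := hproj x hx w
    have hs' : fderiv ℝ (φ t) x (Ps x w) ∈ Vs (φ t x) := by
      rw [← hequivs t x hx]; exact Submodule.mem_map_of_mem h1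
    have hu' : fderiv ℝ (φ t) x (Pu x w) ∈ Vu (φ t x) := by
      rw [← hequivu t x hx]; exact Submodule.mem_map_of_mem h2
    have hc' : fderiv ℝ (φ t) x (Pc x w) ∈ Vc (φ t x) := by
      rw [← hequivc t x hx]; exact Submodule.mem_map_of_mem h3
    have hsum : fderiv ℝ (φ t) x (Ps x w) + fderiv ℝ (φ t) x (Pu x w)
        + fderiv ℝ (φ t) x (Pc x w) = fderiv ℝ (φ t) x w := by
      rw [← map_add, ← map_add, h4]
    obtain ⟨q1, q2, q3⟩ := huniq (φ t x) (hmem t x hx) _ _ _ _ hs' hu' hc' hsum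
    exact ⟨q1, q2⟩
  -- εc pairing
  have hεcX : ∀ x ∈ K, εc x (X x) = η x := by
    intro x hx
    obtain ⟨h1, h2, h3, h4⟩ := hproj x hx (X x)
    obtain ⟨e1, e2, e3⟩ := hεc x hx
    have h5 : εc x (X x) = εc x (Ps x (X x)) + εc x (Pu x (X x)) + εc x (Pc x (X x)) := by
      rw [← map_add, ← map_add, h4]
    rw [h5, e1 _ h1, e2 _ h2, hη x hx]
    simp [e3]
  -- Bounds on the various continuous data over the compact set K
  obtain ⟨BF₀, hBF₀⟩ := hKc.exists_bound_of_continuousOn hF.continuous.continuousOn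
  set BF := max BF₀ 0 with hBFdef
  have hBF : ∀ x ∈ K, ‖F x‖ ≤ BF := fun x hx => (hBF₀ x hx).trans (le_max_left _ _)
  obtain ⟨BX₀, hBX₀⟩ := hKc.exists_bound_of_continuousOn hXc
  set BX := max BX₀ 0 with hBXdef
  have hBX : ∀ x ∈ K, ‖X x‖ ≤ BX := fun x hx => (hBX₀ x hx).trans (le_max_left _ _)
  have hBX0 : 0 ≤ BX := le_max_right _ _
  obtain ⟨W₀, hW₀⟩ := hKc.exists_bound_of_continuousOn hωc
  set W := max W₀ 0 with hWdef
  have hW : ∀ x ∈ K, ‖ω x‖ ≤ W := fun x hx => (hW₀ x hx).trans (le_max_left _ _)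
  have hW0 : 0 ≤ W := le_max_right _ _
  obtain ⟨M₀, hM₀⟩ := hPbdd
  set M := max M₀ 0 with hMdef
  have hM0 : 0 ≤ M := le_max_right _ _
  have hMs : ∀ x ∈ K, ‖Ps x‖ ≤ M := by
    intro x hx
    have := hM₀ x hx
    have h1 := norm_nonneg (Pu x); have h2 := norm_nonneg (Pc x)
    refine le_trans (by linarith) (le_max_left _ _)
  have hMu : ∀ x ∈ K, ‖Pu x‖ ≤ M := by
    intro x hx
    have := hM₀ x hx
    have h1 := norm_nonneg (Ps x); have h2 := norm_nonneg (Pc x)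
    refine le_trans (by linarith) (le_max_left _ _)
  -- the flow is Lipschitz in time on K
  have hlip : ∀ x ∈ K, ∀ s t : ℝ, ‖φ t x - φ s x‖ ≤ BF * |t - s| := by
    intro x hx s t
    have h := Convex.norm_image_sub_le_of_norm_hasDerivWithin_le
      (f := fun r => φ r x) (f' := fun r => F (φ r x)) (s := (Set.univ : Set ℝ))
      (fun r _ => (hφode x r).hasDerivWithinAt)
      (fun r _ => hBF _ (hmem r x hx)) convex_univ (Set.mem_univ s) (Set.mem_univ t)
    simpa [Real.norm_eq_abs] using h
  -- joint continuity of the flow on K × ℝ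
  have hφjc : ContinuousOn (fun p : E × ℝ => φ p.2 p.1) (K ×ˢ (Set.univ : Set ℝ)) := by
    rintro ⟨x₀, t₀⟩ ⟨hx₀, -⟩
    rw [ContinuousWithinAt, tendsto_iff_dist_tendsto_zero]
    have hcont : Continuous fun p : E × ℝ => BF * |p.2 - t₀| + dist (φ t₀ p.1) (φ t₀ x₀) :=
      (continuous_const.mul ((continuous_snd.sub continuous_const).abs)).add
        (((hφC1 t₀).continuous.comp continuous_fst).dist continuous_const)
    have hb : Tendsto (fun p : E × ℝ => BF * |p.2 - t₀| + dist (φ t₀ p.1) (φ t₀ x₀))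
        (𝓝[K ×ˢ (Set.univ : Set ℝ)] (x₀, t₀)) (𝓝 0) := by
      have h0 := hcont.tendsto (x₀, t₀)
      simp only [sub_self, abs_zero, mul_zero, dist_self, add_zero] at h0
      exact h0.mono_left nhdsWithin_le_nhds
    refine squeeze_zero' (Eventually.of_forall fun p => dist_nonneg) ?_ hb
    filter_upwards [self_mem_nhdsWithin] with p hp
    obtain ⟨hpK, -⟩ := hp
    calc dist (φ p.2 p.1) (φ t₀ x₀)
        ≤ dist (φ p.2 p.1) (φ t₀ p.1) + dist (φ t₀ p.1) (φ t₀ x₀) := dist_triangle _ _ _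
      _ ≤ BF * |p.2 - t₀| + dist (φ t₀ p.1) (φ t₀ x₀) :=
          add_le_add (by rw [dist_eq_norm]; exact hlip p.1 hpK t₀ p.2) le_rfl
  -- integrability of the exponential decay
  have hloglam : 0 < -Real.log lam := by
    have := Real.log_neg hlam0 hlam1; linarith
  have hlamInt : IntegrableOn (fun t : ℝ => lam ^ t) (Set.Ioi (0:ℝ)) := by
    have h := exp_neg_integrableOn_Ioi 0 hloglam
    refine h.congr_fun ?_ measurableSet_Ioi
    intro t _
    show Real.exp (-(-Real.log lam) * t) = lam ^ t
    rw [neg_neg, Real.rpow_def_of_pos hlam0]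
  have hlampos : ∀ t : ℝ, 0 < lam ^ t := fun t => Real.rpow_pos_of_pos hlam0 t
  -- continuity of η on K
  have hηC : ContinuousOn η K := by
    intro x₀ hx₀
    obtain ⟨f, -, hfval⟩ := exists_dual_vector ℝ (F x₀) (norm_ne_zero_iff.2 (hFne x₀ hx₀))
    have hfF : f (F x₀) ≠ 0 := by
      rw [hfval]
      simpa using norm_ne_zero_iff.2 (hFne x₀ hx₀)
    have hg1 : ContinuousOn (fun x => f (Pc x (X x))) K :=
      f.continuous.comp_continuousOn (hPcc.clm_apply hXc)
    have hg2 : Continuous fun x => f (F x) := f.continuous.comp hF.continuous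
    have hgc : ContinuousWithinAt (fun x => f (Pc x (X x)) / f (F x)) K x₀ :=
      (hg1 x₀ hx₀).div hg2.continuousWithinAt hfF
    have hev : ∀ᶠ y in 𝓝[K] x₀, f (F y) ≠ 0 := by
      have hopen : IsOpen {y : E | f (F y) ≠ 0} := IsOpen.preimage hg2 isOpen_ne
      exact mem_nhdsWithin_of_mem_nhds (hopen.mem_nhds hfF)
    have heq : η =ᶠ[𝓝[K] x₀] fun x => f (Pc x (X x)) / f (F x) := by
      filter_upwards [hev, self_mem_nhdsWithin] with y hy1 hy2
      have h3 := congrArg f (hη y hy2)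
      rw [ContinuousLinearMap.map_smul, smul_eq_mul] at h3
      field_simp
      linarith [h3]
    refine hgc.congr_of_eventuallyEq heq ?_
    have h3 := congrArg f (hη x₀ hx₀)
    rw [ContinuousLinearMap.map_smul, smul_eq_mul] at h3
    field_simp
    linarith [h3]
  -- the four scalar integrands
  set Fs : E → ℝ → ℝ :=
    fun x t => ω x (fderiv ℝ (φ t) (φ (-t) x) (Ps (φ (-t) x) (X (φ (-t) x)))) with hFsdef
  set Fu : E → ℝ → ℝ :=
    fun x t => ω x (fderiv ℝ (φ (-t)) (φ t x) (Pu (φ t x) (X (φ t x)))) with hFudef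
  set Gs : E → ℝ → ℝ :=
    fun x t => ω (φ t x) (Ps (φ t x) (fderiv ℝ (φ t) x (X x))) with hGsdef
  set Gu : E → ℝ → ℝ :=
    fun x t => ω (φ (-t) x) (Pu (φ (-t) x) (fderiv ℝ (φ (-t)) x (X x))) with hGudef
  -- continuity of the integrands on K × ℝ
  have hmfst : Set.MapsTo (fun p : E × ℝ => p.1) (K ×ˢ (Set.univ : Set ℝ)) K :=
    fun p hp => hp.1
  have hyC : ContinuousOn (fun p : E × ℝ => φ (-p.2) p.1) (K ×ˢ (Set.univ : Set ℝ)) := by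
    have : Continuous fun p : E × ℝ => (p.1, -p.2) :=
      continuous_fst.prodMk continuous_snd.neg
    exact hφjc.comp this.continuousOn fun p hp => ⟨hp.1, Set.mem_univ _⟩
  have hyK : Set.MapsTo (fun p : E × ℝ => φ (-p.2) p.1) (K ×ˢ (Set.univ : Set ℝ)) K :=
    fun p hp => hmem _ _ hp.1
  have hzK : Set.MapsTo (fun p : E × ℝ => φ p.2 p.1) (K ×ˢ (Set.univ : Set ℝ)) K :=
    fun p hp => hmem _ _ hp.1
  have hFsC : ContinuousOn (fun p : E × ℝ => Fs p.1 p.2) (K ×ˢ (Set.univ : Set ℝ)) := by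
    refine ContinuousOn.clm_apply (hωc.comp continuous_fst.continuousOn hmfst) ?_
    refine ContinuousOn.clm_apply ?_ ((hPsc.comp hyC hyK).clm_apply (hXc.comp hyC hyK))
    exact hφD.comp_continuousOn (continuous_snd.continuousOn.prodMk hyC)
  have hFuC : ContinuousOn (fun p : E × ℝ => Fu p.1 p.2) (K ×ˢ (Set.univ : Set ℝ)) := by
    refine ContinuousOn.clm_apply (hωc.comp continuous_fst.continuousOn hmfst) ?_
    refine ContinuousOn.clm_apply ?_ ((hPuc.comp hφjc hzK).clm_apply (hXc.comp hφjc hzK))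
    exact hφD.comp_continuousOn (continuous_snd.neg.continuousOn.prodMk hφjc)
  have hGsC : ContinuousOn (fun p : E × ℝ => Gs p.1 p.2) (K ×ˢ (Set.univ : Set ℝ)) := by
    refine ContinuousOn.clm_apply (hωc.comp hφjc hzK) ?_
    refine ContinuousOn.clm_apply (hPsc.comp hφjc hzK) ?_
    refine ContinuousOn.clm_apply ?_ (hXc.comp continuous_fst.continuousOn hmfst)
    exact hφD.comp_continuousOn (continuous_snd.continuousOn.prodMk continuous_fst.continuousOn)
  have hGuC : ContinuousOn (fun p : E × ℝ => Gu p.1 p.2) (K ×ˢ (Set.univ : Set ℝ)) := by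
    refine ContinuousOn.clm_apply (hωc.comp hyC hyK) ?_
    refine ContinuousOn.clm_apply (hPuc.comp hyC hyK) ?_
    refine ContinuousOn.clm_apply ?_ (hXc.comp continuous_fst.continuousOn hmfst)
    exact hφD.comp_continuousOn (continuous_snd.neg.continuousOn.prodMk continuous_fst.continuousOn)
  -- pointwise bounds on the integrands
  have hPsXb : ∀ y ∈ K, ‖Ps y (X y)‖ ≤ M * BX := by
    intro y hy
    exact le_trans ((Ps y).le_opNorm _)
      (mul_le_mul (hMs y hy) (hBX y hy) (norm_nonneg _) hM0)
  have hPuXb : ∀ y ∈ K, ‖Pu y (X y)‖ ≤ M * BX := by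
    intro y hy
    exact le_trans ((Pu y).le_opNorm _)
      (mul_le_mul (hMu y hy) (hBX y hy) (norm_nonneg _) hM0)
  have hgsB : ∀ x ∈ K, ∀ t : ℝ, 0 ≤ t →
      ‖fderiv ℝ (φ t) (φ (-t) x) (Ps (φ (-t) x) (X (φ (-t) x)))‖ ≤ C * M * BX * lam ^ t := by
    intro x hx t ht
    have hyK' : φ (-t) x ∈ K := hmem _ _ hx
    calc ‖fderiv ℝ (φ t) (φ (-t) x) (Ps (φ (-t) x) (X (φ (-t) x)))‖
        ≤ C * lam ^ t * ‖Ps (φ (-t) x) (X (φ (-t) x))‖ :=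
          hyps t ht _ hyK' _ (hproj _ hyK' _).1
      _ ≤ C * lam ^ t * (M * BX) := by
          refine mul_le_mul_of_nonneg_left (hPsXb _ hyK') ?_
          positivity
      _ = C * M * BX * lam ^ t := by ring
  have hguB : ∀ x ∈ K, ∀ t : ℝ, 0 ≤ t →
      ‖fderiv ℝ (φ (-t)) (φ t x) (Pu (φ t x) (X (φ t x)))‖ ≤ C * M * BX * lam ^ t := by
    intro x hx t ht
    have hzK' : φ t x ∈ K := hmem _ _ hx
    calc ‖fderiv ℝ (φ (-t)) (φ t x) (Pu (φ t x) (X (φ t x)))‖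
        ≤ C * lam ^ t * ‖Pu (φ t x) (X (φ t x))‖ :=
          hypu t ht _ hzK' _ (hproj _ hzK' _).2.1
      _ ≤ C * lam ^ t * (M * BX) := by
          refine mul_le_mul_of_nonneg_left (hPuXb _ hzK') ?_
          positivity
      _ = C * M * BX * lam ^ t := by ring
  have hFsB : ∀ x ∈ K, ∀ t : ℝ, 0 ≤ t → |Fs x t| ≤ W * C * M * BX * lam ^ t := by
    intro x hx t ht
    calc |Fs x t| ≤ ‖ω x‖ * ‖fderiv ℝ (φ t) (φ (-t) x) (Ps (φ (-t) x) (X (φ (-t) x)))‖ :=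
          (ω x).le_opNorm _
      _ ≤ W * (C * M * BX * lam ^ t) :=
          mul_le_mul (hW x hx) (hgsB x hx t ht) (norm_nonneg _) hW0
      _ = W * C * M * BX * lam ^ t := by ring
  have hFuB : ∀ x ∈ K, ∀ t : ℝ, 0 ≤ t → |Fu x t| ≤ W * C * M * BX * lam ^ t := by
    intro x hx t ht
    calc |Fu x t| ≤ ‖ω x‖ * ‖fderiv ℝ (φ (-t)) (φ t x) (Pu (φ t x) (X (φ t x)))‖ :=
          (ω x).le_opNorm _
      _ ≤ W * (C * M * BX * lam ^ t) :=
          mul_le_mul (hW x hx) (hguB x hx t ht) (norm_nonneg _) hW0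
      _ = W * C * M * BX * lam ^ t := by ring
  have hGsB : ∀ x ∈ K, ∀ t : ℝ, 0 ≤ t → |Gs x t| ≤ W * C * M * BX * lam ^ t := by
    intro x hx t ht
    have hcs := (hcomm t x hx (X x)).1
    have h2 : ‖fderiv ℝ (φ t) x (Ps x (X x))‖ ≤ C * lam ^ t * (M * BX) := by
      refine le_trans (hyps t ht x hx _ (hproj x hx _).1) ?_
      refine mul_le_mul_of_nonneg_left (hPsXb x hx) ?_
      positivity
    calc |Gs x t| = |ω (φ t x) (fderiv ℝ (φ t) x (Ps x (X x)))| := by rw [hGsdef]; simp only []; rw [hcs]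
      _ ≤ ‖ω (φ t x)‖ * ‖fderiv ℝ (φ t) x (Ps x (X x))‖ := (ω (φ t x)).le_opNorm _
      _ ≤ W * (C * lam ^ t * (M * BX)) :=
          mul_le_mul (hW _ (hmem t x hx)) h2 (norm_nonneg _) hW0
      _ = W * C * M * BX * lam ^ t := by ring
  have hGuB : ∀ x ∈ K, ∀ t : ℝ, 0 ≤ t → |Gu x t| ≤ W * C * M * BX * lam ^ t := by
    intro x hx t ht
    have hcu := (hcomm (-t) x hx (X x)).2
    have h2 : ‖fderiv ℝ (φ (-t)) x (Pu x (X x))‖ ≤ C * lam ^ t * (M * BX) := by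
      refine le_trans (hypu t ht x hx _ (hproj x hx _).2.1) ?_
      refine mul_le_mul_of_nonneg_left (hPuXb x hx) ?_
      positivity
    calc |Gu x t| = |ω (φ (-t) x) (fderiv ℝ (φ (-t)) x (Pu x (X x)))| := by
          rw [hGudef]; simp only []; rw [hcu]
      _ ≤ ‖ω (φ (-t) x)‖ * ‖fderiv ℝ (φ (-t)) x (Pu x (X x))‖ := (ω (φ (-t) x)).le_opNorm _
      _ ≤ W * (C * lam ^ t * (M * BX)) :=
          mul_le_mul (hW _ (hmem (-t) x hx)) h2 (norm_nonneg _) hW0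
      _ = W * C * M * BX * lam ^ t := by ring
  -- integrability on the product space
  have hmeasKIoi : MeasurableSet (K ×ˢ Set.Ioi (0:ℝ)) := hKm.prod measurableSet_Ioi
  have hdom : Integrable (fun p : E × ℝ => W * C * M * BX * lam ^ p.2)
      ((ρ.restrict K).prod (volume.restrict (Set.Ioi (0:ℝ)))) :=
    Integrable.mul_prod (integrable_const (W * C * M * BX)) hlamInt
  have hprodInt : ∀ f : E → ℝ → ℝ,
      ContinuousOn (fun p : E × ℝ => f p.1 p.2) (K ×ˢ (Set.univ : Set ℝ)) →
      (∀ x ∈ K, ∀ t : ℝ, 0 ≤ t → |f x t| ≤ W * C * M * BX * lam ^ t) →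
      Integrable (fun p : E × ℝ => f p.1 p.2)
        ((ρ.restrict K).prod (volume.restrict (Set.Ioi (0:ℝ)))) := by
    intro f hfc hfb
    refine Integrable.mono' hdom ?_ ?_
    · rw [Measure.prod_restrict]
      exact (hfc.mono (Set.prod_mono (subset_refl K) (Set.subset_univ _))).aestronglyMeasurable
        hmeasKIoi
    · rw [Measure.prod_restrict]
      filter_upwards [ae_restrict_mem hmeasKIoi] with p hp
      rw [Real.norm_eq_abs]
      exact hfb p.1 hp.1 p.2 (le_of_lt hp.2)
  have hIFs := hprodInt Fs hFsC hFsB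
  have hIFu := hprodInt Fu hFuC hFuB
  have hIGs := hprodInt Gs hGsC hGsB
  have hIGu := hprodInt Gu hGuC hGuB
  -- integrability in time, for each fixed x, of the vector-valued integrands
  have hgscI : ∀ x ∈ K, Integrable
      (fun t : ℝ => fderiv ℝ (φ t) (φ (-t) x) (Ps (φ (-t) x) (X (φ (-t) x))))
      (volume.restrict (Set.Ioi (0:ℝ))) := by
    intro x hx
    have hyc : Continuous fun t : ℝ => φ (-t) x := (hcx x).comp continuous_neg
    have hin : ∀ t : ℝ, φ (-t) x ∈ K := fun t => hmem _ _ hx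
    have hcont : Continuous fun t : ℝ =>
        fderiv ℝ (φ t) (φ (-t) x) (Ps (φ (-t) x) (X (φ (-t) x))) := by
      refine Continuous.clm_apply (hφD.comp (continuous_id.prodMk hyc)) ?_
      exact Continuous.clm_apply (hPsc.comp_continuous hyc hin) (hXc.comp_continuous hyc hin)
    refine Integrable.mono' (hlamInt.const_mul (C * M * BX)) hcont.aestronglyMeasurable ?_
    filter_upwards [ae_restrict_mem measurableSet_Ioi] with t ht
    exact le_trans (hgsB x hx t (le_of_lt ht)) (le_of_eq (by ring))
  have hgucI : ∀ x ∈ K, Integrable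
      (fun t : ℝ => fderiv ℝ (φ (-t)) (φ t x) (Pu (φ t x) (X (φ t x))))
      (volume.restrict (Set.Ioi (0:ℝ))) := by
    intro x hx
    have hzc : Continuous fun t : ℝ => φ t x := hcx x
    have hin : ∀ t : ℝ, φ t x ∈ K := fun t => hmem _ _ hx
    have hcont : Continuous fun t : ℝ =>
        fderiv ℝ (φ (-t)) (φ t x) (Pu (φ t x) (X (φ t x))) := by
      refine Continuous.clm_apply (hφD.comp (continuous_neg.prodMk hzc)) ?_
      exact Continuous.clm_apply (hPuc.comp_continuous hzc hin) (hXc.comp_continuous hzc hin)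
    refine Integrable.mono' (hlamInt.const_mul (C * M * BX)) hcont.aestronglyMeasurable ?_
    filter_upwards [ae_restrict_mem measurableSet_Ioi] with t ht
    exact le_trans (hguB x hx t (le_of_lt ht)) (le_of_eq (by ring))
  -- integrability in time of the operator valued integrands
  have hLsI : ∀ x ∈ K, Integrable
      (fun t : ℝ => ((ω (φ t x)).comp (Ps (φ t x))).comp (fderiv ℝ (φ t) x))
      (volume.restrict (Set.Ioi (0:ℝ))) := by
    intro x hx
    have hzc : Continuous fun t : ℝ => φ t x := hcx x
    have hin : ∀ t : ℝ, φ t x ∈ K := fun t => hmem _ _ hx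
    have hcont : Continuous fun t : ℝ =>
        ((ω (φ t x)).comp (Ps (φ t x))).comp (fderiv ℝ (φ t) x) :=
      Continuous.clm_comp (Continuous.clm_comp (hωc.comp_continuous hzc hin)
        (hPsc.comp_continuous hzc hin)) (hφD.comp (continuous_id.prodMk continuous_const))
    refine Integrable.mono' (hlamInt.const_mul (W * C * M)) hcont.aestronglyMeasurable ?_
    filter_upwards [ae_restrict_mem measurableSet_Ioi] with t ht
    have hb : ‖((ω (φ t x)).comp (Ps (φ t x))).comp (fderiv ℝ (φ t) x)‖
        ≤ W * C * M * lam ^ t := by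
      refine ContinuousLinearMap.opNorm_le_bound _ (by positivity) fun w => ?_
      have hPsw : ‖Ps x w‖ ≤ M * ‖w‖ :=
        le_trans ((Ps x).le_opNorm w) (mul_le_mul_of_nonneg_right (hMs x hx) (norm_nonneg _))
      calc ‖(((ω (φ t x)).comp (Ps (φ t x))).comp (fderiv ℝ (φ t) x)) w‖
          = ‖ω (φ t x) (fderiv ℝ (φ t) x (Ps x w))‖ := by
            simp only [ContinuousLinearMap.comp_apply]
            rw [(hcomm t x hx w).1]
        _ ≤ ‖ω (φ t x)‖ * ‖fderiv ℝ (φ t) x (Ps x w)‖ := (ω (φ t x)).le_opNorm _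
        _ ≤ W * (C * lam ^ t * (M * ‖w‖)) := by
            refine mul_le_mul (hW _ (hmem t x hx)) ?_ (norm_nonneg _) hW0
            refine le_trans (hyps t (le_of_lt ht) x hx _ (hproj x hx w).1) ?_
            exact mul_le_mul_of_nonneg_left hPsw (by positivity)
        _ = W * C * M * lam ^ t * ‖w‖ := by ring
    exact le_trans hb (le_of_eq (by ring))
  have hLuI : ∀ x ∈ K, Integrable
      (fun t : ℝ => ((ω (φ (-t) x)).comp (Pu (φ (-t) x))).comp (fderiv ℝ (φ (-t)) x))
      (volume.restrict (Set.Ioi (0:ℝ))) := by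
    intro x hx
    have hyc : Continuous fun t : ℝ => φ (-t) x := (hcx x).comp continuous_neg
    have hin : ∀ t : ℝ, φ (-t) x ∈ K := fun t => hmem _ _ hx
    have hcont : Continuous fun t : ℝ =>
        ((ω (φ (-t) x)).comp (Pu (φ (-t) x))).comp (fderiv ℝ (φ (-t)) x) :=
      Continuous.clm_comp (Continuous.clm_comp (hωc.comp_continuous hyc hin)
        (hPuc.comp_continuous hyc hin)) (hφD.comp (continuous_neg.prodMk continuous_const))
    refine Integrable.mono' (hlamInt.const_mul (W * C * M)) hcont.aestronglyMeasurable ?_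
    filter_upwards [ae_restrict_mem measurableSet_Ioi] with t ht
    have hb : ‖((ω (φ (-t) x)).comp (Pu (φ (-t) x))).comp (fderiv ℝ (φ (-t)) x)‖
        ≤ W * C * M * lam ^ t := by
      refine ContinuousLinearMap.opNorm_le_bound _ (by positivity) fun w => ?_
      have hPuw : ‖Pu x w‖ ≤ M * ‖w‖ :=
        le_trans ((Pu x).le_opNorm w) (mul_le_mul_of_nonneg_right (hMu x hx) (norm_nonneg _))
      calc ‖(((ω (φ (-t) x)).comp (Pu (φ (-t) x))).comp (fderiv ℝ (φ (-t)) x)) w‖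
          = ‖ω (φ (-t) x) (fderiv ℝ (φ (-t)) x (Pu x w))‖ := by
            simp only [ContinuousLinearMap.comp_apply]
            rw [(hcomm (-t) x hx w).2]
        _ ≤ ‖ω (φ (-t) x)‖ * ‖fderiv ℝ (φ (-t)) x (Pu x w)‖ := (ω (φ (-t) x)).le_opNorm _
        _ ≤ W * (C * lam ^ t * (M * ‖w‖)) := by
            refine mul_le_mul (hW _ (hmem (-t) x hx)) ?_ (norm_nonneg _) hW0
            refine le_trans (hypu t (le_of_lt ht) x hx _ (hproj x hx w).2.1) ?_
            exact mul_le_mul_of_nonneg_left hPuw (by positivity)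
        _ = W * C * M * lam ^ t * ‖w‖ := by ring
    exact le_trans hb (le_of_eq (by ring))
  -- pointwise identities
  have hstepA : ∀ x ∈ K, ω x (v x)
      = (∫ t in Set.Ioi (0:ℝ), Fs x t) - ∫ t in Set.Ioi (0:ℝ), Fu x t := by
    intro x hx
    rw [hv x hx, map_sub,
      ← ContinuousLinearMap.integral_comp_comm (ω x) (hgscI x hx),
      ← ContinuousLinearMap.integral_comp_comm (ω x) (hgucI x hx)]
  have hstepD : ∀ x ∈ K, ν x (X x) =
      (∫ t in Set.Ioi (0:ℝ), Gs x t) - (∫ t in Set.Ioi (0:ℝ), Gu x t) - ψ x * η x := by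
    intro x hx
    rw [hν x hx]
    rw [ContinuousLinearMap.sub_apply, ContinuousLinearMap.sub_apply,
      ContinuousLinearMap.smul_apply, ContinuousLinearMap.integral_apply (hLsI x hx),
      ContinuousLinearMap.integral_apply (hLuI x hx), hεcX x hx, smul_eq_mul]
    simp only [ContinuousLinearMap.comp_apply]
    rfl
  -- substitution by the measure-preserving flow
  have hsubFs : ∀ t : ℝ, (∫ x in K, Fs x t ∂ρ) = ∫ x in K, Gs x t ∂ρ := by
    intro t
    rw [← hsubst t fun x => Fs x t]
    refine setIntegral_congr_fun hKm fun y hy => ?_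
    show Fs (φ t y) t = Gs y t
    simp only [hFsdef, hGsdef]
    rw [hinv t y, (hcomm t y hy (X y)).1]
  have hsubFu : ∀ t : ℝ, (∫ x in K, Fu x t ∂ρ) = ∫ x in K, Gu x t ∂ρ := by
    intro t
    rw [← hsubst (-t) fun x => Fu x t]
    refine setIntegral_congr_fun hKm fun y hy => ?_
    show Fu (φ (-t) y) t = Gu y t
    simp only [hFudef, hGudef]
    rw [hinv' t y, (hcomm (-t) y hy (X y)).2]
  -- Fubini
  have hfubFs : (∫ x in K, (∫ t in Set.Ioi (0:ℝ), Fs x t) ∂ρ)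
      = ∫ t in Set.Ioi (0:ℝ), (∫ x in K, Fs x t ∂ρ) := integral_integral_swap hIFs
  have hfubFu : (∫ x in K, (∫ t in Set.Ioi (0:ℝ), Fu x t) ∂ρ)
      = ∫ t in Set.Ioi (0:ℝ), (∫ x in K, Fu x t ∂ρ) := integral_integral_swap hIFu
  have hfubGs : (∫ x in K, (∫ t in Set.Ioi (0:ℝ), Gs x t) ∂ρ)
      = ∫ t in Set.Ioi (0:ℝ), (∫ x in K, Gs x t ∂ρ) := integral_integral_swap hIGs
  have hfubGu : (∫ x in K, (∫ t in Set.Ioi (0:ℝ), Gu x t) ∂ρ)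
      = ∫ t in Set.Ioi (0:ℝ), (∫ x in K, Gu x t ∂ρ) := integral_integral_swap hIGu
  -- integrability of the time-integrated marginals
  have hIntAs : Integrable (fun x => ∫ t in Set.Ioi (0:ℝ), Fs x t) (ρ.restrict K) := by
    simpa using hIFs.integral_prod_left
  have hIntAu : Integrable (fun x => ∫ t in Set.Ioi (0:ℝ), Fu x t) (ρ.restrict K) := by
    simpa using hIFu.integral_prod_left
  have hIntBs : Integrable (fun x => ∫ t in Set.Ioi (0:ℝ), Gs x t) (ρ.restrict K) := by
    simpa using hIGs.integral_prod_left
  have hIntBu : Integrable (fun x => ∫ t in Set.Ioi (0:ℝ), Gu x t) (ρ.restrict K) := by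
    simpa using hIGu.integral_prod_left
  have hηψI : IntegrableOn (fun x => ψ x * η x) K ρ :=
    (hψc.mul hηC).integrableOn_compact hKc
  -- assembling everything
  have hL1 : (∫ x in K, ω x (v x) ∂ρ)
      = (∫ x in K, (∫ t in Set.Ioi (0:ℝ), Fs x t) ∂ρ)
        - ∫ x in K, (∫ t in Set.Ioi (0:ℝ), Fu x t) ∂ρ := by
    rw [setIntegral_congr_fun hKm fun x hx => hstepA x hx]
    exact integral_sub hIntAs hIntAu
  have hL2 : (∫ x in K, η x * ψ x ∂ρ) = ∫ x in K, ψ x * η x ∂ρ :=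
    setIntegral_congr_fun hKm fun x _ => mul_comm _ _
  have hR1 : (∫ x in K, ν x (X x) ∂ρ)
      = ((∫ x in K, (∫ t in Set.Ioi (0:ℝ), Gs x t) ∂ρ)
        - ∫ x in K, (∫ t in Set.Ioi (0:ℝ), Gu x t) ∂ρ) - ∫ x in K, ψ x * η x ∂ρ := by
    rw [setIntegral_congr_fun hKm fun x hx => hstepD x hx]
    have h1 : Integrable (fun x => (∫ t in Set.Ioi (0:ℝ), Gs x t)
        - ∫ t in Set.Ioi (0:ℝ), Gu x t) (ρ.restrict K) := hIntBs.sub hIntBu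
    rw [integral_sub h1 hηψI, integral_sub hIntBs hIntBu]
  rw [hL1, hL2, hR1, hfubFs, hfubFu, hfubGs, hfubGu,
    integral_congr_ae (Eventually.of_forall hsubFs),
    integral_congr_ae (Eventually.of_forall hsubFu)]
end

section
/- Let x_t := φ^t(x₀) be an orbit in K. If ν : ℝ → E* is differentiable, bounded, and satisfies the homogeneous adjoint ODE d/dt ν_t = −ν_t ∘ DF(x_t) for all t ∈ ℝ, then ν_t ∘ P^s(x_t) = 0 and ν_t ∘ P^u(x_t) = 0 for all t; consequently ν_t = c · ε^c(x_t) for all t, where the constant c = ν_t(F(x_t)) is independent of t. (A bounded homogeneous adjoint solution along an orbit lies in the one-dimensional center adjoint direction.) -/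
open Function Set Filter MeasureTheory Topology

theorem bounded_homogeneous_adjoint_center_flow
    {E : Type*} [NormedAddCommGroup E] [NormedSpace ℝ E] [FiniteDimensional ℝ E]
    (F : E → E) (hF : ContDiff ℝ 2 F)
    (φ : ℝ → E → E)
    (hφ0 : ∀ x : E, φ 0 x = x)
    (hφadd : ∀ (s t : ℝ) (x : E), φ (s + t) x = φ s (φ t x))
    (hφode : ∀ (x : E) (t : ℝ), HasDerivAt (fun s => φ s x) (F (φ t x)) t)
    (hφC1 : ∀ t : ℝ, ContDiff ℝ 1 (φ t))
    (hφD : Continuous fun p : ℝ × E => fderiv ℝ (φ p.1) p.2)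
    (K : Set E) (hKc : IsCompact K) (hφK : ∀ t : ℝ, φ t '' K = K)
    (hFne : ∀ x ∈ K, F x ≠ 0)
    (Vs Vu Vc : E → Submodule ℝ E)
    (hVc : ∀ x ∈ K, Vc x = Submodule.span ℝ {F x})
    (hequivs : ∀ (t : ℝ), ∀ x ∈ K, (Vs x).map (fderiv ℝ (φ t) x : E →ₗ[ℝ] E) = Vs (φ t x))
    (hequivu : ∀ (t : ℝ), ∀ x ∈ K, (Vu x).map (fderiv ℝ (φ t) x : E →ₗ[ℝ] E) = Vu (φ t x))
    (hequivc : ∀ (t : ℝ), ∀ x ∈ K, (Vc x).map (fderiv ℝ (φ t) x : E →ₗ[ℝ] E) = Vc (φ t x))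
    (C lam : ℝ) (hC : 0 < C) (hlam0 : 0 < lam) (hlam1 : lam < 1)
    (hyps : ∀ t : ℝ, 0 ≤ t → ∀ x ∈ K, ∀ v ∈ Vs x, ‖fderiv ℝ (φ t) x v‖ ≤ C * lam ^ t * ‖v‖)
    (hypu : ∀ t : ℝ, 0 ≤ t → ∀ x ∈ K, ∀ v ∈ Vu x, ‖fderiv ℝ (φ (-t)) x v‖ ≤ C * lam ^ t * ‖v‖)
    (Ps Pu Pc : E → E →L[ℝ] E)
    (hproj : ∀ x ∈ K, ∀ v : E, Ps x v ∈ Vs x ∧ Pu x v ∈ Vu x ∧ Pc x v ∈ Vc x ∧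
      Ps x v + Pu x v + Pc x v = v)
    (hdirect : ∀ x ∈ K, ∀ vs ∈ Vs x, ∀ vu ∈ Vu x, ∀ vc ∈ Vc x,
      vs + vu + vc = 0 → vs = 0 ∧ vu = 0 ∧ vc = 0)
    (hPbdd : ∃ M : ℝ, ∀ x ∈ K, ‖Ps x‖ + ‖Pu x‖ + ‖Pc x‖ ≤ M)
    (εc : E → E →L[ℝ] ℝ)
    (hεc : ∀ x ∈ K, (∀ v ∈ Vs x, εc x v = 0) ∧ (∀ v ∈ Vu x, εc x v = 0) ∧ εc x (F x) = 1)
    (x₀ : E) (hx₀ : x₀ ∈ K)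
    (ν : ℝ → E →L[ℝ] ℝ) (hνb : ∃ M : ℝ, ∀ t : ℝ, ‖ν t‖ ≤ M)
    (hode : ∀ t : ℝ, HasDerivAt ν (-(ν t).comp (fderiv ℝ F (φ t x₀))) t) :
    (∀ t : ℝ, (ν t).comp (Ps (φ t x₀)) = 0 ∧ (ν t).comp (Pu (φ t x₀)) = 0) ∧
    ∃ c : ℝ, (∀ t : ℝ, ν t = c • εc (φ t x₀)) ∧ ∀ t : ℝ, ν t (F (φ t x₀)) = c := by
  classical
  -- basic differentiability / continuity facts
  have hφdiff : ∀ (t : ℝ) (z : E), DifferentiableAt ℝ (φ t) z :=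
    fun t z => ((hφC1 t).differentiable one_ne_zero) z
  have hFdiff : Differentiable ℝ F := hF.differentiable two_ne_zero
  have hFcont : Continuous F := hFdiff.continuous
  have hDFcont : Continuous (fderiv ℝ F) := (hF.fderiv_right (m := 1) le_rfl).continuous
  have horbdiff : ∀ z : E, Differentiable ℝ (fun s => φ s z) :=
    fun z t => (hφode z t).differentiableAt
  have horbcont : ∀ z : E, Continuous (fun s => φ s z) := fun z => (horbdiff z).continuous
  have hDφcont : ∀ z : E, Continuous (fun t => fderiv ℝ (φ t) z) := by
    intro z
    exact hφD.comp (continuous_id.prodMk continuous_const)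
  -- chain rule for the flow derivative
  have hchain : ∀ (s t : ℝ) (z : E),
      fderiv ℝ (φ (s + t)) z = (fderiv ℝ (φ s) (φ t z)).comp (fderiv ℝ (φ t) z) := by
    intro s t z
    have h : φ (s + t) = φ s ∘ φ t := funext fun w => hφadd s t w
    rw [h]
    exact fderiv_comp z (hφdiff s (φ t z)) (hφdiff t z)
  have hfderiv0 : ∀ z : E, fderiv ℝ (φ 0) z = ContinuousLinearMap.id ℝ E := by
    intro z
    have h : φ 0 = id := funext hφ0
    rw [h, fderiv_id]
  have hinv : ∀ (t : ℝ) (z : E),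
      (fderiv ℝ (φ t) (φ (-t) z)).comp (fderiv ℝ (φ (-t)) z) = ContinuousLinearMap.id ℝ E := by
    intro t z
    have h := hchain t (-t) z
    rw [show t + -t = 0 by ring, hfderiv0] at h
    exact h.symm
  -- orbit stays in K
  have horbK : ∀ t : ℝ, φ t x₀ ∈ K := by
    intro t; rw [← hφK t]; exact ⟨x₀, hx₀, rfl⟩
  -- integral equation for the flow
  have hintid : ∀ (z : E) (r : ℝ), φ r z = z + ∫ u in (0:ℝ)..r, F (φ u z) := by
    intro z r
    have hI : (∫ u in (0:ℝ)..r, F (φ u z)) = φ r z - φ 0 z :=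
      intervalIntegral.integral_eq_sub_of_hasDerivAt (fun u _ => hφode z u)
        ((hFcont.comp (horbcont z)).intervalIntegrable 0 r)
    rw [hI, hφ0]; abel
  -- the variational (integral) equation for the derivative of the flow at x₀
  have hvar : ∀ r : ℝ, fderiv ℝ (φ r) x₀ =
      ContinuousLinearMap.id ℝ E +
        ∫ u in (0:ℝ)..r, (fderiv ℝ F (φ u x₀)).comp (fderiv ℝ (φ u) x₀) := by
    intro r
    -- bound on the flow derivative on a compact time-space set
    obtain ⟨M, hM⟩ := ((isCompact_uIcc (a := (0:ℝ)) (b := r)).prod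
      (isCompact_closedBall x₀ 1)).exists_bound_of_continuousOn hφD.continuousOn
    have hM0 : 0 ≤ M := le_trans (norm_nonneg _) (hM (0, x₀) ⟨left_mem_uIcc, Metric.mem_closedBall_self zero_le_one⟩)
    -- bound on the orbit of x₀
    obtain ⟨R, hR⟩ := (isCompact_uIcc (a := (0:ℝ)) (b := r)).exists_bound_of_continuousOn
      (horbcont x₀).continuousOn
    -- Lipschitz control of φ u on the closed ball
    have hLip : ∀ u ∈ uIcc (0:ℝ) r, ∀ z ∈ Metric.closedBall x₀ 1, ‖φ u z - φ u x₀‖ ≤ M * ‖z - x₀‖ := by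
      intro u hu z hz
      exact (convex_closedBall x₀ 1).norm_image_sub_le_of_norm_fderiv_le
        (fun w _ => hφdiff u w) (fun w hw => hM (u, w) ⟨hu, hw⟩)
        (Metric.mem_closedBall_self zero_le_one) hz
    have hmem : ∀ u ∈ uIcc (0:ℝ) r, ∀ z ∈ Metric.closedBall x₀ 1, φ u z ∈ Metric.closedBall (0:E) (R + M) := by
      intro u hu z hz
      rw [mem_closedBall_iff_norm, sub_zero]
      calc ‖φ u z‖ ≤ ‖φ u x₀‖ + ‖φ u z - φ u x₀‖ := norm_le_norm_add_norm_sub' _ _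
        _ ≤ R + M * ‖z - x₀‖ := add_le_add (hR u hu) (hLip u hu z hz)
        _ ≤ R + M * 1 := by
            have := mem_closedBall_iff_norm.mp hz
            nlinarith
        _ = R + M := by ring
    -- bound on the derivative of F on a big ball
    obtain ⟨L, hL⟩ := (isCompact_closedBall (0:E) (R + M)).exists_bound_of_continuousOn
      hDFcont.continuousOn
    -- differentiation under the integral sign
    have key := intervalIntegral.hasFDerivAt_integral_of_dominated_of_fderiv_le
      (F := fun z u => F (φ u z))
      (F' := fun z u => (fderiv ℝ F (φ u z)).comp (fderiv ℝ (φ u) z))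
      (x₀ := x₀) (a := 0) (b := r) (μ := volume) (bound := fun _ => L * M)
      (Metric.ball_mem_nhds x₀ zero_lt_one)
      (Eventually.of_forall fun z =>
        ((hFcont.comp (horbcont z)).stronglyMeasurable.aestronglyMeasurable))
      ((hFcont.comp (horbcont x₀)).intervalIntegrable 0 r)
      (((hDFcont.comp (horbcont x₀)).clm_comp (hDφcont x₀)).stronglyMeasurable.aestronglyMeasurable)
      ?_ (intervalIntegrable_const) ?_
    · have hfun : φ r = fun z => z + ∫ u in (0:ℝ)..r, F (φ u z) := funext fun z => hintid z r
      have hsum : HasFDerivAt (fun z => z + ∫ u in (0:ℝ)..r, F (φ u z))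
          (ContinuousLinearMap.id ℝ E +
            ∫ u in (0:ℝ)..r, (fderiv ℝ F (φ u x₀)).comp (fderiv ℝ (φ u) x₀)) x₀ :=
        (hasFDerivAt_id x₀).add key
      rw [hfun]
      exact hsum.fderiv
    · -- the bound
      refine Eventually.of_forall fun u hu z hz => ?_
      have hu' : u ∈ uIcc (0:ℝ) r := uIoc_subset_uIcc hu
      have hz' : z ∈ Metric.closedBall x₀ 1 := Metric.ball_subset_closedBall hz
      calc ‖(fderiv ℝ F (φ u z)).comp (fderiv ℝ (φ u) z)‖
          ≤ ‖fderiv ℝ F (φ u z)‖ * ‖fderiv ℝ (φ u) z‖ := ContinuousLinearMap.opNorm_comp_le _ _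
        _ ≤ L * M := by
            have h1 := hL (φ u z) (hmem u hu' z hz')
            have h2 := hM (u, z) ⟨hu', hz'⟩
            have h3 : (0:ℝ) ≤ ‖fderiv ℝ (φ u) z‖ := norm_nonneg _
            have h4 : (0:ℝ) ≤ ‖fderiv ℝ F (φ u z)‖ := norm_nonneg _
            nlinarith
    · -- the pointwise differentiability
      refine Eventually.of_forall fun u _ z _ => ?_
      exact ((hFdiff (φ u z)).hasFDerivAt).comp z ((hφdiff u z).hasFDerivAt)
  -- time derivative of the flow derivative (variational equation)
  have hW : ∀ t : ℝ, HasDerivAt (fun r => fderiv ℝ (φ r) x₀)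
      ((fderiv ℝ F (φ t x₀)).comp (fderiv ℝ (φ t) x₀)) t := by
    intro t
    have hAcont : Continuous fun u : ℝ => (fderiv ℝ F (φ u x₀)).comp (fderiv ℝ (φ u) x₀) :=
      (hDFcont.comp (horbcont x₀)).clm_comp (hDφcont x₀)
    have h1 : HasDerivAt (fun r => ∫ u in (0:ℝ)..r, (fderiv ℝ F (φ u x₀)).comp (fderiv ℝ (φ u) x₀))
        ((fderiv ℝ F (φ t x₀)).comp (fderiv ℝ (φ t) x₀)) t :=
      intervalIntegral.integral_hasDerivAt_right (hAcont.intervalIntegrable 0 t)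
        (hAcont.stronglyMeasurableAtFilter _ _) hAcont.continuousAt
    have h2 := (hasDerivAt_const t (ContinuousLinearMap.id ℝ E)).add h1
    have hfun : (fun r => fderiv ℝ (φ r) x₀) = fun r =>
        ContinuousLinearMap.id ℝ E +
          ∫ u in (0:ℝ)..r, (fderiv ℝ F (φ u x₀)).comp (fderiv ℝ (φ u) x₀) := funext hvar
    rw [hfun]
    exact h2.congr_deriv (zero_add _)
  -- the conserved pairing
  have hcons : ∀ (v : E) (t : ℝ), ν t (fderiv ℝ (φ t) x₀ v) = ν 0 v := by
    intro v t
    have hg : ∀ s : ℝ, HasDerivAt (fun r => ν r (fderiv ℝ (φ r) x₀ v)) 0 s := by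
      intro s
      have hWv : HasDerivAt (fun r => fderiv ℝ (φ r) x₀ v)
          ((fderiv ℝ F (φ s x₀)).comp (fderiv ℝ (φ s) x₀) v) s := by
        simpa using (hW s).clm_apply (hasDerivAt_const s v)
      have h := (hode s).clm_apply hWv
      have h0 : (-(ν s).comp (fderiv ℝ F (φ s x₀))) (fderiv ℝ (φ s) x₀ v)
          + ν s ((fderiv ℝ F (φ s x₀)).comp (fderiv ℝ (φ s) x₀) v) = 0 := by
        simp
      rwa [h0] at h
    have hdiffg : Differentiable ℝ (fun r => ν r (fderiv ℝ (φ r) x₀ v)) :=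
      fun s => (hg s).differentiableAt
    have hconst := is_const_of_deriv_eq_zero hdiffg (fun s => (hg s).deriv) t 0
    rw [hconst, hfderiv0]
    rfl
  -- shifted conserved pairing along the orbit
  have hcons2 : ∀ (s t : ℝ) (w : E), ν (s + t) (fderiv ℝ (φ t) (φ s x₀) w) = ν s w := by
    intro s t w
    set u := fderiv ℝ (φ (-s)) (φ s x₀) w with hu
    have h1 : φ (-s) (φ s x₀) = x₀ := by
      rw [← hφadd]; simp [hφ0]
    have hsu : fderiv ℝ (φ s) x₀ u = w := by
      have h := hinv s (φ s x₀)
      rw [h1] at h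
      calc fderiv ℝ (φ s) x₀ u
          = ((fderiv ℝ (φ s) x₀).comp (fderiv ℝ (φ (-s)) (φ s x₀))) w := rfl
        _ = w := by rw [h]; rfl
    have h2 : fderiv ℝ (φ (t + s)) x₀ = (fderiv ℝ (φ t) (φ s x₀)).comp (fderiv ℝ (φ s) x₀) :=
      hchain t s x₀
    have h3 := hcons u (t + s)
    rw [h2, ContinuousLinearMap.comp_apply, hsu] at h3
    have h4 := hcons u s
    rw [hsu] at h4
    rw [add_comm s t, h3, h4]
  -- boundedness of ν
  obtain ⟨M, hMν⟩ := hνb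
  have hM0 : 0 ≤ M := le_trans (norm_nonneg _) (hMν 0)
  -- ν kills the stable directions
  have hdecay : Tendsto (fun t : ℝ => lam ^ t) atTop (𝓝 0) :=
    tendsto_rpow_atTop_of_base_lt_one lam (by linarith) hlam1
  have hzs : ∀ (s : ℝ) (v : E), v ∈ Vs (φ s x₀) → ν s v = 0 := by
    intro s v hv
    have key : ∀ t : ℝ, 0 ≤ t → ‖ν s v‖ ≤ M * (C * lam ^ t * ‖v‖) := by
      intro t ht
      rw [← hcons2 s t v]
      calc ‖ν (s + t) (fderiv ℝ (φ t) (φ s x₀) v)‖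
          ≤ ‖ν (s + t)‖ * ‖fderiv ℝ (φ t) (φ s x₀) v‖ := (ν (s + t)).le_opNorm _
        _ ≤ M * (C * lam ^ t * ‖v‖) :=
            mul_le_mul (hMν _) (hyps t ht _ (horbK s) v hv) (norm_nonneg _) hM0
    have htends : Tendsto (fun t : ℝ => M * (C * lam ^ t * ‖v‖)) atTop (𝓝 0) := by
      have h := ((hdecay.const_mul C).mul_const ‖v‖).const_mul M
      simpa using h
    have hle : ‖ν s v‖ ≤ 0 :=
      ge_of_tendsto htends (eventually_atTop.2 ⟨0, fun t ht => key t ht⟩)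
    exact norm_le_zero_iff.mp hle
  -- ν kills the unstable directions
  have hzu : ∀ (s : ℝ) (v : E), v ∈ Vu (φ s x₀) → ν s v = 0 := by
    intro s v hv
    have key : ∀ t : ℝ, 0 ≤ t → ‖ν s v‖ ≤ M * (C * lam ^ t * ‖v‖) := by
      intro t ht
      rw [← hcons2 s (-t) v]
      calc ‖ν (s + -t) (fderiv ℝ (φ (-t)) (φ s x₀) v)‖
          ≤ ‖ν (s + -t)‖ * ‖fderiv ℝ (φ (-t)) (φ s x₀) v‖ := (ν (s + -t)).le_opNorm _
        _ ≤ M * (C * lam ^ t * ‖v‖) :=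
            mul_le_mul (hMν _) (hypu t ht _ (horbK s) v hv) (norm_nonneg _) hM0
    have htends : Tendsto (fun t : ℝ => M * (C * lam ^ t * ‖v‖)) atTop (𝓝 0) := by
      have h := ((hdecay.const_mul C).mul_const ‖v‖).const_mul M
      simpa using h
    have hle : ‖ν s v‖ ≤ 0 :=
      ge_of_tendsto htends (eventually_atTop.2 ⟨0, fun t ht => key t ht⟩)
    exact norm_le_zero_iff.mp hle
  -- equivariance of the vector field
  have hFeq : ∀ t : ℝ, fderiv ℝ (φ t) x₀ (F x₀) = F (φ t x₀) := by
    intro t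
    have h1 : HasDerivAt (fun s : ℝ => φ (t + s) x₀) (F (φ t x₀)) 0 := by
      have hh : HasDerivAt (fun s : ℝ => t + s) 1 0 := by
        simpa using (hasDerivAt_id (0:ℝ)).const_add t
      have hg : HasDerivAt (fun r : ℝ => φ r x₀) (F (φ (t + 0) x₀)) (t + 0) := hφode x₀ (t + 0)
      have := hg.scomp 0 hh
      simpa [Function.comp_def] using this
    have h2 : HasDerivAt (fun s : ℝ => φ (t + s) x₀) (fderiv ℝ (φ t) x₀ (F x₀)) 0 := by
      have hfd : HasFDerivAt (φ t) (fderiv ℝ (φ t) x₀) (φ 0 x₀) := by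
        rw [hφ0]; exact (hφdiff t x₀).hasFDerivAt
      have hor : HasDerivAt (fun s : ℝ => φ s x₀) (F x₀) 0 := by
        have := hφode x₀ 0
        rwa [hφ0] at this
      have h := hfd.comp_hasDerivAt 0 hor
      simp only [Function.comp_def] at h
      have hfun : (fun s : ℝ => φ t (φ s x₀)) = fun s : ℝ => φ (t + s) x₀ :=
        funext fun s => (hφadd t s x₀).symm
      rwa [hfun] at h
    exact h2.unique h1
  -- conclusion
  have hc : ∀ t : ℝ, ν t (F (φ t x₀)) = ν 0 (F x₀) := by
    intro t
    rw [← hFeq t]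
    exact hcons (F x₀) t
  refine ⟨fun t => ⟨?_, ?_⟩, ν 0 (F x₀), fun t => ?_, hc⟩
  · ext v
    simpa using hzs t (Ps (φ t x₀) v) (hproj _ (horbK t) v).1
  · ext v
    simpa using hzu t (Pu (φ t x₀) v) (hproj _ (horbK t) v).2.1
  · ext v
    obtain ⟨hvs, hvu, hvc, hsum⟩ := hproj _ (horbK t) v
    rw [hVc _ (horbK t)] at hvc
    obtain ⟨a, ha⟩ := Submodule.mem_span_singleton.mp hvc
    obtain ⟨h1, h2, h3⟩ := hεc _ (horbK t)
    have hν : ν t v = a * ν 0 (F x₀) := by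
      conv_lhs => rw [← hsum]
      rw [map_add, map_add, hzs t _ hvs, hzu t _ hvu, ← ha]
      simp [hc t]
    have hε : εc (φ t x₀) v = a := by
      conv_lhs => rw [← hsum]
      rw [map_add, map_add, h1 _ hvs, h2 _ hvu, ← ha]
      simp [h3]
    simp [hν, hε]
    ring
end
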